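/- The sum over all pairs (m1,m2) with m1 ≤ 3N and m2 ≤ 3N^2 of R(m1,m2)^2 is O(N^3 log N), where R(m1,m2) counts triples (y1,y2,y3) with yi ≤ N, y1+y2+y3 = m1, y1^2+y2^2+y3^2 = m2. Equivalently, the number of sextuples (x1,x2,x3,y1,y2,y3) in {1,...,N}^6 with x1+x2+x3 = y1+y2+y3 and x1^2+x2^2+x3^2 = y1^2+y2^2+y3^2 is O(N^3 log N). -/

import Mathlib

open Finset

set_option maxHeartbeats 1000000


lemma aux_param {Y x y z w : ℕ} (hx1 : 1 ≤ x) (hxY : x ≤ Y) (hy1 : 1 ≤ y) (hyY : y ≤ Y)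
    (hz1 : 1 ≤ z) (hzY : z ≤ Y) (hw1 : 1 ≤ w) (hwY : w ≤ Y) (h : x * y = z * w) :
    x = Nat.gcd x z * (x / Nat.gcd x z) ∧ z = Nat.gcd x z * (z / Nat.gcd x z) ∧
    w = (x / Nat.gcd x z) * (w / (x / Nat.gcd x z)) ∧
    y = (z / Nat.gcd x z) * (w / (x / Nat.gcd x z)) ∧
    1 ≤ Nat.gcd x z ∧ Nat.gcd x z ≤ Y ∧
    1 ≤ w / (x / Nat.gcd x z) ∧ w / (x / Nat.gcd x z) ≤ Y ∧
    1 ≤ x / Nat.gcd x z ∧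
    x / Nat.gcd x z ≤ Y / max (Nat.gcd x z) (w / (x / Nat.gcd x z)) ∧
    1 ≤ z / Nat.gcd x z ∧
    z / Nat.gcd x z ≤ Y / max (Nat.gcd x z) (w / (x / Nat.gcd x z)) := by
  set g := Nat.gcd x z with hgdef
  have hg : 0 < g := Nat.gcd_pos_of_pos_left _ hx1
  have hxg : g ∣ x := Nat.gcd_dvd_left x z
  have hzg : g ∣ z := Nat.gcd_dvd_right x z
  set x' := x / g with hx'def
  set z' := z / g with hz'def
  have hx : x = g * x' := (Nat.mul_div_cancel' hxg).symm
  have hz : z = g * z' := (Nat.mul_div_cancel' hzg).symm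
  have hcop : Nat.Coprime x' z' := Nat.coprime_div_gcd_div_gcd hg
  have hx'pos : 0 < x' := Nat.div_pos (Nat.le_of_dvd hx1 hxg) hg
  have hz'pos : 0 < z' := Nat.div_pos (Nat.le_of_dvd hz1 hzg) hg
  have hxy' : x' * y = z' * w := by
    have h2 : g * (x' * y) = g * (z' * w) := by
      rw [← mul_assoc, ← mul_assoc, ← hx, ← hz]; exact h
    exact Nat.eq_of_mul_eq_mul_left hg h2
  have hx'w : x' ∣ w := by
    have : x' ∣ w * z' := ⟨y, by rw [mul_comm w z', ← hxy'] ⟩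
    exact (Nat.Coprime.dvd_of_dvd_mul_right hcop this)
  set k := w / x' with hkdef
  have hw : w = x' * k := (Nat.mul_div_cancel' hx'w).symm
  have hkpos : 0 < k := Nat.div_pos (Nat.le_of_dvd hw1 hx'w) hx'pos
  have hy : y = z' * k := by
    have h2 : x' * y = x' * (z' * k) := by
      rw [hxy', hw]; ring
    exact Nat.eq_of_mul_eq_mul_left hx'pos h2
  have hmaxpos : 0 < max g k := lt_of_lt_of_le hg (le_max_left _ _)
  refine ⟨hx, hz, hw, hy, hg, le_trans (Nat.le_of_dvd hx1 hxg) hxY, hkpos,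
    le_trans (Nat.le_of_dvd hw1 ⟨x', by rw [mul_comm]; exact hw⟩) hwY, hx'pos, ?_, hz'pos, ?_⟩
  · rw [Nat.le_div_iff_mul_le hmaxpos]
    rcases max_choice g k with hm | hm <;> rw [hm]
    · rw [mul_comm, ← hx]; exact hxY
    · rw [← hw]; exact hwY
  · rw [Nat.le_div_iff_mul_le hmaxpos]
    rcases max_choice g k with hm | hm <;> rw [hm]
    · rw [mul_comm, ← hz]; exact hzY
    · rw [← hy]; exact hyY


lemma aux_EP_card (Y : ℕ) (hY : 1 ≤ Y) :
    ((((Icc 1 Y ×ˢ Icc 1 Y) ×ˢ (Icc 1 Y ×ˢ Icc 1 Y)).filter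
        (fun q : (ℕ×ℕ)×(ℕ×ℕ) => q.1.1 * q.1.2 = q.2.1 * q.2.2)).card : ℝ) ≤
      4 * (Y:ℝ)^2 * (1 + Real.log (2*Y)) := by
  classical
  have step1 : (((Icc 1 Y ×ˢ Icc 1 Y) ×ˢ (Icc 1 Y ×ˢ Icc 1 Y)).filter
        (fun q : (ℕ×ℕ)×(ℕ×ℕ) => q.1.1 * q.1.2 = q.2.1 * q.2.2)).card ≤
      ((Icc 1 Y ×ˢ Icc 1 Y).biUnion (fun gk =>
        ({gk} : Finset (ℕ×ℕ)) ×ˢ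
          (Icc 1 (Y / max gk.1 gk.2) ×ˢ Icc 1 (Y / max gk.1 gk.2)))).card := by
    apply Finset.card_le_card_of_injOn (fun q =>
      ((Nat.gcd q.1.1 q.2.1, q.2.2 / (q.1.1 / Nat.gcd q.1.1 q.2.1)),
       (q.1.1 / Nat.gcd q.1.1 q.2.1, q.2.1 / Nat.gcd q.1.1 q.2.1)))
    · intro q hq
      simp only [mem_coe, mem_filter, mem_product, mem_Icc] at hq
      obtain ⟨⟨⟨⟨hx1, hxY⟩, hy1, hyY⟩, ⟨hz1, hzY⟩, hw1, hwY⟩, h⟩ := hq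
      obtain ⟨hx, hz, hw, hy, hg1, hgY, hk1, hkY, hx'1, hx'le, hz'1, hz'le⟩ :=
        aux_param hx1 hxY hy1 hyY hz1 hzY hw1 hwY h
      apply Finset.mem_biUnion.2
      refine ⟨(Nat.gcd q.1.1 q.2.1, q.2.2 / (q.1.1 / Nat.gcd q.1.1 q.2.1)), ?_, ?_⟩
      · exact Finset.mem_product.2 ⟨Finset.mem_Icc.2 ⟨hg1, hgY⟩, Finset.mem_Icc.2 ⟨hk1, hkY⟩⟩
      · simp only [Finset.mem_product, Finset.mem_singleton, Finset.mem_Icc]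
        exact ⟨trivial, ⟨hx'1, hx'le⟩, hz'1, hz'le⟩
    · intro q hq q' hq' heq
      simp only [mem_coe, mem_filter, mem_product, mem_Icc] at hq hq'
      obtain ⟨⟨⟨⟨hx1, hxY⟩, hy1, hyY⟩, ⟨hz1, hzY⟩, hw1, hwY⟩, h⟩ := hq
      obtain ⟨⟨⟨⟨hx1', hxY'⟩, hy1', hyY'⟩, ⟨hz1', hzY'⟩, hw1', hwY'⟩, h'⟩ := hq'
      obtain ⟨hx, hz, hw, hy, _⟩ := aux_param hx1 hxY hy1 hyY hz1 hzY hw1 hwY h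
      obtain ⟨hx', hz', hw', hy', _⟩ := aux_param hx1' hxY' hy1' hyY' hz1' hzY' hw1' hwY' h'
      simp only [Prod.mk.injEq] at heq
      obtain ⟨⟨e1, e2⟩, e3, e4⟩ := heq
      have ex : q.1.1 = q'.1.1 := by rw [hx, hx', e3, e1]
      have ez : q.2.1 = q'.2.1 := by rw [hz, hz', e4, e1]
      have ew : q.2.2 = q'.2.2 := by rw [hw, hw', e2, e3]
      have ey : q.1.2 = q'.1.2 := by rw [hy, hy', e2, e4]
      exact Prod.ext (Prod.ext ex ey) (Prod.ext ez ew)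
  have step2 : ((Icc 1 Y ×ˢ Icc 1 Y).biUnion (fun gk =>
        ({gk} : Finset (ℕ×ℕ)) ×ˢ
          (Icc 1 (Y / max gk.1 gk.2) ×ˢ Icc 1 (Y / max gk.1 gk.2)))).card ≤
      ∑ gk ∈ Icc 1 Y ×ˢ Icc 1 Y, (Y / max gk.1 gk.2) * (Y / max gk.1 gk.2) := by
    refine le_trans (Finset.card_biUnion_le) (Finset.sum_le_sum ?_)
    intro gk _
    rw [Finset.card_product, Finset.card_product, Finset.card_singleton, Nat.card_Icc]
    simp
  have step3 : ((∑ gk ∈ Icc 1 Y ×ˢ Icc 1 Y,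
        (Y / max gk.1 gk.2) * (Y / max gk.1 gk.2) : ℕ) : ℝ) ≤
      ∑ gk ∈ Icc 1 Y ×ˢ Icc 1 Y, (2*(Y:ℝ)/((gk.1 + gk.2 : ℕ):ℝ))^2 := by
    rw [Nat.cast_sum]
    apply Finset.sum_le_sum
    intro gk hgk
    simp only [mem_product, mem_Icc] at hgk
    obtain ⟨⟨hg1, hgY⟩, hk1, hkY⟩ := hgk
    have hM : 0 < max gk.1 gk.2 := lt_of_lt_of_le hg1 (le_max_left _ _)
    have hMr : (0:ℝ) < ((max gk.1 gk.2 : ℕ):ℝ) := by exact_mod_cast hM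
    have hS : (0:ℝ) < ((gk.1 + gk.2 : ℕ):ℝ) := by
      have : 0 < gk.1 + gk.2 := by omega
      exact_mod_cast this
    have h1 : ((Y / max gk.1 gk.2 : ℕ) : ℝ) ≤ (Y:ℝ) / ((max gk.1 gk.2 : ℕ):ℝ) :=
      Nat.cast_div_le
    have h2 : (Y:ℝ) / ((max gk.1 gk.2 : ℕ):ℝ) ≤ 2*(Y:ℝ)/((gk.1 + gk.2 : ℕ):ℝ) := by
      rw [div_le_div_iff₀ hMr hS]
      have hle : ((gk.1 + gk.2 : ℕ):ℝ) ≤ 2 * ((max gk.1 gk.2 : ℕ):ℝ) := by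
        have : gk.1 + gk.2 ≤ 2 * max gk.1 gk.2 := by omega
        exact_mod_cast this
      nlinarith [Nat.cast_nonneg (α := ℝ) Y]
    have hle : ((Y / max gk.1 gk.2 : ℕ) : ℝ) ≤ 2*(Y:ℝ)/((gk.1 + gk.2 : ℕ):ℝ) :=
      le_trans h1 h2
    have hnn : (0:ℝ) ≤ ((Y / max gk.1 gk.2 : ℕ) : ℝ) := Nat.cast_nonneg _
    push_cast
    push_cast at hle hnn
    nlinarith
  have step4 : (∑ gk ∈ Icc 1 Y ×ˢ Icc 1 Y, (2*(Y:ℝ)/((gk.1 + gk.2 : ℕ):ℝ))^2) ≤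
      ∑ s ∈ Icc 2 (2*Y), (s:ℝ) * (2*(Y:ℝ)/(s:ℝ))^2 := by
    have hmap : ∀ gk ∈ Icc 1 Y ×ˢ Icc 1 Y, gk.1 + gk.2 ∈ Icc 2 (2*Y) := by
      intro gk hgk
      simp only [mem_product, mem_Icc] at hgk
      simp only [mem_Icc]
      omega
    rw [← Finset.sum_fiberwise_of_maps_to hmap
      (fun gk => (2*(Y:ℝ)/((gk.1 + gk.2 : ℕ):ℝ))^2)]
    apply Finset.sum_le_sum
    intro s hs
    simp only [mem_Icc] at hs
    have hcongr : ∑ gk ∈ (Icc 1 Y ×ˢ Icc 1 Y).filter (fun gk => gk.1 + gk.2 = s),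
          (2*(Y:ℝ)/((gk.1 + gk.2 : ℕ):ℝ))^2
        = ∑ _gk ∈ (Icc 1 Y ×ˢ Icc 1 Y).filter (fun gk => gk.1 + gk.2 = s),
          (2*(Y:ℝ)/(s:ℝ))^2 := by
      apply Finset.sum_congr rfl
      intro gk hgk
      simp only [mem_filter] at hgk
      rw [hgk.2]
    rw [hcongr, Finset.sum_const, nsmul_eq_mul]
    have hcard : ((Icc 1 Y ×ˢ Icc 1 Y).filter (fun gk => gk.1 + gk.2 = s)).card ≤ s := by
      have hinj : ((Icc 1 Y ×ˢ Icc 1 Y).filter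
          (fun gk => gk.1 + gk.2 = s)).card ≤ (Icc 1 s).card := by
        apply Finset.card_le_card_of_injOn (fun gk => gk.1)
        · intro gk hgk
          simp only [mem_coe, mem_filter, mem_product, mem_Icc] at hgk
          simp only [mem_coe, mem_Icc]
          omega
        · intro a ha b hb hab
          simp only [mem_coe, mem_filter] at ha hb
          have h1 : a.1 + a.2 = s := ha.2
          have h2 : b.1 + b.2 = s := hb.2
          have h3 : a.1 = b.1 := hab
          have h4 : a.2 = b.2 := by omega
          exact Prod.ext h3 h4
      simpa [Nat.card_Icc] using hinj
    have hnn : (0:ℝ) ≤ (2*(Y:ℝ)/(s:ℝ))^2 := sq_nonneg _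
    have : (((Icc 1 Y ×ˢ Icc 1 Y).filter (fun gk => gk.1 + gk.2 = s)).card : ℝ) ≤ (s:ℝ) := by
      exact_mod_cast hcard
    nlinarith
  have step5 : (∑ s ∈ Icc 2 (2*Y), (s:ℝ) * (2*(Y:ℝ)/(s:ℝ))^2) ≤
      4 * (Y:ℝ)^2 * (1 + Real.log (2*Y)) := by
    have heq : ∀ s ∈ Icc 2 (2*Y), (s:ℝ) * (2*(Y:ℝ)/(s:ℝ))^2 = 4*(Y:ℝ)^2 * ((s:ℝ))⁻¹ := by
      intro s hs
      simp only [mem_Icc] at hs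
      have hs0 : (s:ℝ) ≠ 0 := Nat.cast_ne_zero.mpr (by omega)
      field_simp
      ring
    rw [Finset.sum_congr rfl heq, ← Finset.mul_sum]
    have hsub : (∑ s ∈ Icc 2 (2*Y), ((s:ℝ))⁻¹) ≤ ∑ s ∈ Icc 1 (2*Y), ((s:ℝ))⁻¹ := by
      apply Finset.sum_le_sum_of_subset_of_nonneg
      · apply Finset.Icc_subset_Icc_left; omega
      · intro i _ _; positivity
    have hharm : (∑ s ∈ Icc 1 (2*Y), ((s:ℝ))⁻¹) ≤ 1 + Real.log ((2*Y:ℕ):ℝ) := by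
      have h1 : ((harmonic (2*Y) : ℚ) : ℝ) ≤ 1 + Real.log ((2*Y:ℕ):ℝ) :=
        harmonic_le_one_add_log (2*Y)
      have h2 : (∑ s ∈ Icc 1 (2*Y), ((s:ℝ))⁻¹) = ((harmonic (2*Y) : ℚ) : ℝ) := by
        rw [harmonic_eq_sum_Icc]
        push_cast
        rfl
      linarith
    have hcast : Real.log ((2*Y:ℕ):ℝ) = Real.log (2*(Y:ℝ)) := by push_cast; rfl
    rw [hcast] at hharm
    have h4 : (0:ℝ) ≤ 4*(Y:ℝ)^2 := by positivity
    calc 4*(Y:ℝ)^2 * (∑ s ∈ Icc 2 (2*Y), ((s:ℝ))⁻¹)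
        ≤ 4*(Y:ℝ)^2 * (1 + Real.log (2*(Y:ℝ))) := by
          apply mul_le_mul_of_nonneg_left _ h4
          linarith
      _ = 4 * (Y:ℝ)^2 * (1 + Real.log (2*Y)) := by norm_num
  have c1 := Nat.cast_le (α := ℝ) |>.2 step1
  have c2 := Nat.cast_le (α := ℝ) |>.2 step2
  linarith


lemma aux_W_card (N : ℕ) :
    (((Icc (-(4*(N:ℤ))) (4*N) ×ˢ Icc (-(4*(N:ℤ))) (4*N)) ×ˢ
       (Icc (-(4*(N:ℤ))) (4*N) ×ˢ Icc (-(4*(N:ℤ))) (4*N))).filter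
      (fun q : (ℤ×ℤ)×(ℤ×ℤ) => q.1.1 * q.1.2 = 3 * (q.2.1 * q.2.2))).card ≤
    4 * (8*N+1)^2 +
      8 * (((Icc 1 (12*N) ×ˢ Icc 1 (12*N)) ×ˢ (Icc 1 (12*N) ×ˢ Icc 1 (12*N))).filter
        (fun q : (ℕ×ℕ)×(ℕ×ℕ) => q.1.1 * q.1.2 = q.2.1 * q.2.2)).card := by
  classical
  set A : Finset ℤ := Icc (-(4*(N:ℤ))) (4*N) with hA
  set W : Finset ((ℤ×ℤ)×(ℤ×ℤ)) := ((A ×ˢ A) ×ˢ (A ×ˢ A)).filter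
      (fun q : (ℤ×ℤ)×(ℤ×ℤ) => q.1.1 * q.1.2 = 3 * (q.2.1 * q.2.2)) with hW
  have hsplit : (W.filter (fun q => q.1.1 * q.1.2 = 0)).card +
      (W.filter (fun q => ¬ q.1.1 * q.1.2 = 0)).card = W.card :=
    Finset.card_filter_add_card_filter_not _
  have hAcard : A.card = 8*N+1 := by
    rw [hA, Int.card_Icc]
    omega
  -- zero part
  have hW0 : (W.filter (fun q => q.1.1 * q.1.2 = 0)).card ≤
      ((A ×ˢ A) ×ˢ (univ : Finset (Bool×Bool))).card := by
    apply Finset.card_le_card_of_injOn (fun q =>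
      ((q.1.1 + q.1.2, q.2.1 + q.2.2), (decide (q.1.1 = 0), decide (q.2.1 = 0))))
    · intro q hq
      simp only [mem_coe, hW, mem_filter, mem_product, mem_Icc, hA] at hq
      obtain ⟨⟨⟨⟨⟨hu1, hu2⟩, hv1, hv2⟩, ⟨hz1, hz2⟩, hw1, hw2⟩, heq⟩, h0⟩ := hq
      have h0' : q.1.1 = 0 ∨ q.1.2 = 0 := mul_eq_zero.mp h0
      have hzw0 : q.2.1 = 0 ∨ q.2.2 = 0 := by
        have : (3:ℤ) * (q.2.1 * q.2.2) = 0 := by rw [← heq]; exact h0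
        have h2 : q.2.1 * q.2.2 = 0 := by linarith
        exact mul_eq_zero.mp h2
      simp only [mem_coe, mem_product, mem_Icc, mem_univ, and_true, hA]
      constructor
      · rcases h0' with h | h <;> rw [h] <;> constructor <;> omega
      · rcases hzw0 with h | h <;> rw [h] <;> constructor <;> omega
    · intro q hq q' hq' heq
      simp only [mem_coe, hW, mem_filter, mem_product, mem_Icc, hA] at hq hq'
      obtain ⟨⟨-, heq1⟩, h0⟩ := hq
      obtain ⟨⟨-, heq1'⟩, h0'⟩ := hq'
      simp only [Prod.mk.injEq] at heq
      obtain ⟨⟨e1, e2⟩, e3, e4⟩ := heq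
      have b1 : q.1.1 = 0 ↔ q'.1.1 = 0 := by
        constructor <;> intro h <;> [skip; skip] <;> simpa [h] using (decide_eq_decide.mp e3)
      have b2 : q.2.1 = 0 ↔ q'.2.1 = 0 := decide_eq_decide.mp e4
      have h0a : q.1.1 = 0 ∨ q.1.2 = 0 := mul_eq_zero.mp h0
      have h0a' : q'.1.1 = 0 ∨ q'.1.2 = 0 := mul_eq_zero.mp h0'
      have hzw : q.2.1 * q.2.2 = 0 := by
        have : (3:ℤ) * (q.2.1 * q.2.2) = 0 := by rw [← heq1]; exact h0
        linarith
      have hzw' : q'.2.1 * q'.2.2 = 0 := by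
        have : (3:ℤ) * (q'.2.1 * q'.2.2) = 0 := by rw [← heq1']; exact h0'
        linarith
      have h0b : q.2.1 = 0 ∨ q.2.2 = 0 := mul_eq_zero.mp hzw
      have h0b' : q'.2.1 = 0 ∨ q'.2.2 = 0 := mul_eq_zero.mp hzw'
      have euv : q.1.1 = q'.1.1 ∧ q.1.2 = q'.1.2 := by
        rcases h0a with h | h
        · have h' : q'.1.1 = 0 := b1.mp h
          constructor <;> omega
        · by_cases hc : q.1.1 = 0
          · have h' : q'.1.1 = 0 := b1.mp hc
            constructor <;> omega
          · have h' : ¬ q'.1.1 = 0 := fun hh => hc (b1.mpr hh)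
            have : q'.1.2 = 0 := by tauto
            constructor <;> omega
      have ezw : q.2.1 = 0 ∨ q.2.2 = 0 → q.2.1 = q'.2.1 ∧ q.2.2 = q'.2.2 := by
        intro _
        rcases h0b with h | h
        · have h' : q'.2.1 = 0 := b2.mp h
          constructor <;> omega
        · by_cases hc : q.2.1 = 0
          · have h' : q'.2.1 = 0 := b2.mp hc
            constructor <;> omega
          · have h' : ¬ q'.2.1 = 0 := fun hh => hc (b2.mpr hh)
            have : q'.2.2 = 0 := by tauto
            constructor <;> omega
      obtain ⟨ea, eb⟩ := euv
      obtain ⟨ec, ed⟩ := ezw h0b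
      exact Prod.ext (Prod.ext ea eb) (Prod.ext ec ed)
  -- nonzero part
  have hW1 : (W.filter (fun q => ¬ q.1.1 * q.1.2 = 0)).card ≤
      ((((Icc 1 (12*N) ×ˢ Icc 1 (12*N)) ×ˢ (Icc 1 (12*N) ×ˢ Icc 1 (12*N))).filter
        (fun q : (ℕ×ℕ)×(ℕ×ℕ) => q.1.1 * q.1.2 = q.2.1 * q.2.2)) ×ˢ
        (univ : Finset (Bool×Bool×Bool))).card := by
    apply Finset.card_le_card_of_injOn (fun q =>
      (((q.1.1.natAbs, q.1.2.natAbs), ((3*q.2.1).natAbs, q.2.2.natAbs)),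
       (decide (0 < q.1.1), decide (0 < q.1.2), decide (0 < q.2.1))))
    · intro q hq
      simp only [mem_coe, hW, mem_filter, mem_product, mem_Icc, hA] at hq
      obtain ⟨⟨⟨⟨⟨hu1, hu2⟩, hv1, hv2⟩, ⟨hz1, hz2⟩, hw1, hw2⟩, heq⟩, h0⟩ := hq
      have hu0 : q.1.1 ≠ 0 := fun h => h0 (by rw [h]; ring)
      have hv0 : q.1.2 ≠ 0 := fun h => h0 (by rw [h]; ring)
      have hzw0 : q.2.1 * q.2.2 ≠ 0 := by
        intro h
        exact h0 (by rw [heq, h]; ring)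
      have hz0 : q.2.1 ≠ 0 := fun h => hzw0 (by rw [h]; ring)
      have hw0 : q.2.2 ≠ 0 := fun h => hzw0 (by rw [h]; ring)
      simp only [mem_coe, mem_product, mem_filter, mem_Icc, mem_univ, and_true]
      refine ⟨⟨⟨⟨?_, ?_⟩, ?_, ?_⟩, ⟨?_, ?_⟩, ?_, ?_⟩, ?_⟩
      · omega
      · omega
      · omega
      · omega
      · omega
      · omega
      · omega
      · omega
      · -- product equality
        have h2 : q.1.1 * q.1.2 = (3*q.2.1) * q.2.2 := by rw [heq]; ring
        have := congrArg Int.natAbs h2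
        rwa [Int.natAbs_mul, Int.natAbs_mul] at this
    · intro q hq q' hq' heq
      simp only [mem_coe, hW, mem_filter, mem_product, mem_Icc, hA] at hq hq'
      obtain ⟨⟨-, heq1⟩, h0⟩ := hq
      obtain ⟨⟨-, heq1'⟩, h0'⟩ := hq'
      have hu0 : q.1.1 ≠ 0 := fun h => h0 (by rw [h]; ring)
      have hv0 : q.1.2 ≠ 0 := fun h => h0 (by rw [h]; ring)
      have hu0' : q'.1.1 ≠ 0 := fun h => h0' (by rw [h]; ring)
      have hv0' : q'.1.2 ≠ 0 := fun h => h0' (by rw [h]; ring)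
      have hzw0 : q.2.1 ≠ 0 := by
        intro h
        exact h0 (by rw [heq1, h]; ring)
      have hzw0' : q'.2.1 ≠ 0 := by
        intro h
        exact h0' (by rw [heq1', h]; ring)
      simp only [Prod.mk.injEq] at heq
      obtain ⟨⟨⟨e1, e2⟩, e3, e4⟩, s1, s2, s3⟩ := heq
      have t1 : (0 < q.1.1) ↔ (0 < q'.1.1) := decide_eq_decide.mp s1
      have t2 : (0 < q.1.2) ↔ (0 < q'.1.2) := decide_eq_decide.mp s2
      have t3 : (0 < q.2.1) ↔ (0 < q'.2.1) := decide_eq_decide.mp s3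
      have eu : q.1.1 = q'.1.1 := by omega
      have ev : q.1.2 = q'.1.2 := by omega
      have ez : q.2.1 = q'.2.1 := by
        have e3' : (3*q.2.1).natAbs = (3*q'.2.1).natAbs := e3
        omega
      have ew : q.2.2 = q'.2.2 := by
        have hc : (3 * q.2.1) * q.2.2 = (3 * q.2.1) * q'.2.2 := by
          have r1 : (3 * q.2.1) * q.2.2 = q.1.1 * q.1.2 := by rw [heq1]; ring
          have r2 : (3 * q.2.1) * q'.2.2 = q'.1.1 * q'.1.2 := by rw [heq1', ez]; ring
          rw [r1, r2, eu, ev]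
        have h3z : (3 * q.2.1) ≠ 0 := by
          intro h
          have : q.2.1 = 0 := by omega
          exact hzw0 this
        exact mul_left_cancel₀ h3z hc
      exact Prod.ext (Prod.ext eu ev) (Prod.ext ez ew)
  have hcard0 : ((A ×ˢ A) ×ˢ (univ : Finset (Bool×Bool))).card = (8*N+1)^2 * 4 := by
    rw [Finset.card_product, Finset.card_product, hAcard]
    simp [Fintype.card_prod]
    ring
  have hcard1 : ∀ (S : Finset ((ℕ×ℕ)×(ℕ×ℕ))),
      (S ×ˢ (univ : Finset (Bool×Bool×Bool))).card = S.card * 8 := by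
    intro S
    rw [Finset.card_product]
    simp [Fintype.card_prod]
  rw [hcard0] at hW0
  rw [hcard1] at hW1
  omega


theorem stmt_2 :
    ∃ C : ℝ, 0 < C ∧ ∀ N : ℕ, 2 ≤ N →
      ((((Finset.Icc 1 N ×ˢ Finset.Icc 1 N ×ˢ Finset.Icc 1 N) ×ˢ
          (Finset.Icc 1 N ×ˢ Finset.Icc 1 N ×ˢ Finset.Icc 1 N)).filter
        (fun z => z.1.1 + z.1.2.1 + z.1.2.2 = z.2.1 + z.2.2.1 + z.2.2.2 ∧
          z.1.1 ^ 2 + z.1.2.1 ^ 2 + z.1.2.2 ^ 2 =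
            z.2.1 ^ 2 + z.2.2.1 ^ 2 + z.2.2.2 ^ 2)).card : ℝ) ≤
        C * (N : ℝ) ^ 3 * Real.log N := by
  classical
  refine ⟨120000, by norm_num, ?_⟩
  intro N hN
  -- Step 1: inject the sextuple set into Icc 1 (3N) × W
  have step1 : (((Finset.Icc 1 N ×ˢ Finset.Icc 1 N ×ˢ Finset.Icc 1 N) ×ˢ
          (Finset.Icc 1 N ×ˢ Finset.Icc 1 N ×ˢ Finset.Icc 1 N)).filter
        (fun z => z.1.1 + z.1.2.1 + z.1.2.2 = z.2.1 + z.2.2.1 + z.2.2.2 ∧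
          z.1.1 ^ 2 + z.1.2.1 ^ 2 + z.1.2.2 ^ 2 =
            z.2.1 ^ 2 + z.2.2.1 ^ 2 + z.2.2.2 ^ 2)).card ≤
      ((Icc 1 (3*N) : Finset ℕ) ×ˢ
        (((Icc (-(4*(N:ℤ))) (4*N) ×ˢ Icc (-(4*(N:ℤ))) (4*N)) ×ˢ
          (Icc (-(4*(N:ℤ))) (4*N) ×ˢ Icc (-(4*(N:ℤ))) (4*N))).filter
          (fun q : (ℤ×ℤ)×(ℤ×ℤ) => q.1.1 * q.1.2 = 3 * (q.2.1 * q.2.2)))).card := by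
    apply Finset.card_le_card_of_injOn (fun p =>
      (p.1.1 + p.1.2.1 + p.1.2.2,
        (((2*(p.1.1:ℤ) - p.1.2.1 - p.1.2.2) - (2*(p.2.1:ℤ) - p.2.2.1 - p.2.2.2),
          (2*(p.1.1:ℤ) - p.1.2.1 - p.1.2.2) + (2*(p.2.1:ℤ) - p.2.2.1 - p.2.2.2)),
         (((p.2.2.1:ℤ) - p.2.2.2) - ((p.1.2.1:ℤ) - p.1.2.2),
          ((p.2.2.1:ℤ) - p.2.2.2) + ((p.1.2.1:ℤ) - p.1.2.2)))))
    · intro p hp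
      simp only [mem_coe, mem_filter, mem_product, mem_Icc] at hp
      obtain ⟨⟨⟨⟨hx11, hx12⟩, ⟨hx21, hx22⟩, hx31, hx32⟩,
        ⟨hy11, hy12⟩, ⟨hy21, hy22⟩, hy31, hy32⟩, h1, h2⟩ := hp
      simp only [mem_coe, mem_product, mem_filter, mem_Icc]
      refine ⟨⟨by omega, by omega⟩, ⟨⟨⟨by omega, by omega⟩, by omega, by omega⟩,
        ⟨by omega, by omega⟩, by omega, by omega⟩, ?_⟩
      -- the quadratic identity
      have h1c : ((p.1.1:ℤ) + p.1.2.1 + p.1.2.2) = (p.2.1:ℤ) + p.2.2.1 + p.2.2.2 := by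
        exact_mod_cast h1
      have h2c : ((p.1.1:ℤ)^2 + (p.1.2.1:ℤ)^2 + (p.1.2.2:ℤ)^2) =
          (p.2.1:ℤ)^2 + (p.2.2.1:ℤ)^2 + (p.2.2.2:ℤ)^2 := by
        exact_mod_cast h2
      linear_combination 6*h2c -
        2*((p.1.1:ℤ) + p.1.2.1 + p.1.2.2 + p.2.1 + p.2.2.1 + p.2.2.2)*h1c
    · intro p hp p' hp' heq
      simp only [mem_coe, mem_filter, mem_product, mem_Icc] at hp hp'
      obtain ⟨-, h1, -⟩ := hp
      obtain ⟨-, h1', -⟩ := hp'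
      simp only [Prod.mk.injEq] at heq
      obtain ⟨e0, ⟨e1, e2⟩, e3, e4⟩ := heq
      have c1 : p.1.1 = p'.1.1 := by omega
      have c2 : p.1.2.1 = p'.1.2.1 := by omega
      have c3 : p.1.2.2 = p'.1.2.2 := by omega
      have c4 : p.2.1 = p'.2.1 := by omega
      have c5 : p.2.2.1 = p'.2.2.1 := by omega
      have c6 : p.2.2.2 = p'.2.2.2 := by omega
      exact Prod.ext (Prod.ext c1 (Prod.ext c2 c3)) (Prod.ext c4 (Prod.ext c5 c6))
  -- cardinal computations
  have hprod : ((Icc 1 (3*N) : Finset ℕ) ×ˢ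
        (((Icc (-(4*(N:ℤ))) (4*N) ×ˢ Icc (-(4*(N:ℤ))) (4*N)) ×ˢ
          (Icc (-(4*(N:ℤ))) (4*N) ×ˢ Icc (-(4*(N:ℤ))) (4*N))).filter
          (fun q : (ℤ×ℤ)×(ℤ×ℤ) => q.1.1 * q.1.2 = 3 * (q.2.1 * q.2.2)))).card =
      (3*N) * (((Icc (-(4*(N:ℤ))) (4*N) ×ˢ Icc (-(4*(N:ℤ))) (4*N)) ×ˢ
          (Icc (-(4*(N:ℤ))) (4*N) ×ˢ Icc (-(4*(N:ℤ))) (4*N))).filter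
          (fun q : (ℤ×ℤ)×(ℤ×ℤ) => q.1.1 * q.1.2 = 3 * (q.2.1 * q.2.2))).card := by
    rw [Finset.card_product, Nat.card_Icc]
    simp
  have step2 := aux_W_card N
  have step3 := aux_EP_card (12*N) (by omega)
  -- real arithmetic
  set S := (((Finset.Icc 1 N ×ˢ Finset.Icc 1 N ×ˢ Finset.Icc 1 N) ×ˢ
          (Finset.Icc 1 N ×ˢ Finset.Icc 1 N ×ˢ Finset.Icc 1 N)).filter
        (fun z => z.1.1 + z.1.2.1 + z.1.2.2 = z.2.1 + z.2.2.1 + z.2.2.2 ∧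
          z.1.1 ^ 2 + z.1.2.1 ^ 2 + z.1.2.2 ^ 2 =
            z.2.1 ^ 2 + z.2.2.1 ^ 2 + z.2.2.2 ^ 2)).card with hS
  set E := (((Icc 1 (12*N) ×ˢ Icc 1 (12*N)) ×ˢ (Icc 1 (12*N) ×ˢ Icc 1 (12*N))).filter
        (fun q : (ℕ×ℕ)×(ℕ×ℕ) => q.1.1 * q.1.2 = q.2.1 * q.2.2)).card with hE
  set Wc := (((Icc (-(4*(N:ℤ))) (4*N) ×ˢ Icc (-(4*(N:ℤ))) (4*N)) ×ˢ
          (Icc (-(4*(N:ℤ))) (4*N) ×ˢ Icc (-(4*(N:ℤ))) (4*N))).filter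
          (fun q : (ℤ×ℤ)×(ℤ×ℤ) => q.1.1 * q.1.2 = 3 * (q.2.1 * q.2.2))).card with hWc
  have hnat : S ≤ 3*N * (4*(8*N+1)^2 + 8*E) := by
    calc S ≤ 3*N * Wc := by rw [← hprod]; exact step1
    _ ≤ 3*N * (4*(8*N+1)^2 + 8*E) := Nat.mul_le_mul_left _ step2
  have hreal : (S:ℝ) ≤ 3*(N:ℝ) * (4*(8*(N:ℝ)+1)^2 + 8*(E:ℝ)) := by
    exact_mod_cast hnat
  have hNr : (2:ℝ) ≤ (N:ℝ) := by exact_mod_cast hN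
  have hN0 : (0:ℝ) < (N:ℝ) := by linarith
  have hlog2 : (0.6931471803:ℝ) < Real.log 2 := Real.log_two_gt_d9
  have hlogN : Real.log 2 ≤ Real.log N := Real.log_le_log (by norm_num) hNr
  -- log (2 * (12 N)) = log(24 N) ≤ log 24 + log N ≤ 5 log N + log N
  have hE24 : (E:ℝ) ≤ 4 * (12*(N:ℝ))^2 * (1 + Real.log (24*(N:ℝ))) := by
    have : (2:ℝ) * ((12*N : ℕ):ℝ) = 24*(N:ℝ) := by push_cast; ring
    calc (E:ℝ) ≤ 4 * ((12*N:ℕ):ℝ)^2 * (1 + Real.log (2*((12*N:ℕ):ℝ))) := step3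
      _ = 4 * (12*(N:ℝ))^2 * (1 + Real.log (24*(N:ℝ))) := by rw [this]; push_cast; ring
  have hlog24 : Real.log (24*(N:ℝ)) = Real.log 24 + Real.log N :=
    Real.log_mul (by norm_num) (by linarith)
  have h24le : Real.log 24 ≤ 5 * Real.log 2 := by
    have h32 : Real.log 24 ≤ Real.log 32 := Real.log_le_log (by norm_num) (by norm_num)
    have : Real.log 32 = 5 * Real.log 2 := by
      rw [show (32:ℝ) = 2^5 by norm_num, Real.log_pow]
      push_cast; ring
    linarith
  have hone : (1:ℝ) ≤ 2 * Real.log N := by nlinarith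
  have hfin : 1 + Real.log (24*(N:ℝ)) ≤ 8 * Real.log N := by
    rw [hlog24]
    nlinarith
  have hlogpos : 0 < Real.log N := by nlinarith
  have hEfin : (E:ℝ) ≤ 576 * (N:ℝ)^2 * (8 * Real.log N) := by
    calc (E:ℝ) ≤ 4 * (12*(N:ℝ))^2 * (1 + Real.log (24*(N:ℝ))) := hE24
      _ ≤ 4 * (12*(N:ℝ))^2 * (8 * Real.log N) := by
          apply mul_le_mul_of_nonneg_left hfin (by positivity)
      _ = 576 * (N:ℝ)^2 * (8 * Real.log N) := by ring
  have hbd2 : (4*(8*(N:ℝ)+1)^2 : ℝ) ≤ 324 * (N:ℝ)^2 := by nlinarith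
  calc (S:ℝ) ≤ 3*(N:ℝ) * (4*(8*(N:ℝ)+1)^2 + 8*(E:ℝ)) := hreal
    _ ≤ 3*(N:ℝ) * (324*(N:ℝ)^2 + 8*(576 * (N:ℝ)^2 * (8 * Real.log N))) := by
        have h8E : 8*(E:ℝ) ≤ 8*(576 * (N:ℝ)^2 * (8 * Real.log N)) := by linarith
        apply mul_le_mul_of_nonneg_left _ (by positivity)
        linarith
    _ = 972*(N:ℝ)^3 + 110592*((N:ℝ)^3*Real.log N) := by ring
    _ ≤ 120000 * (N:ℝ)^3 * Real.log N := by
        have h3 : (N:ℝ)^3*1 ≤ (N:ℝ)^3*(2*Real.log N) :=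
          mul_le_mul_of_nonneg_left hone (by positivity)
        have h4 : (0:ℝ) ≤ (N:ℝ)^3*Real.log N := by positivity
        nlinarith
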